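/- arXiv:1508.07520 — 3 statements merged into one kernel-verified Lean document; each statement's English description precedes it below -/
import Mathlib

section
/- For N = 3 with θ₁ = 0 and μ₁ = μ₂ = μ₃ = 1, the symmetric configuration θ₂ = 3π/4, θ₃ = -3π/4 is a critical point of V. -/
open Real

lemma hasDerivAt_f (x : ℝ) (h : Real.cos x ≠ 1) :
    HasDerivAt (fun y => Real.cos y + (1/2) * Real.log (2 - 2 * Real.cos y))
      (-Real.sin x + Real.sin x / (2 - 2 * Real.cos x)) x := by
  have hne : 2 - 2 * Real.cos x ≠ 0 := fun hc => h (by linarith)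
  have h1 : HasDerivAt (fun y => 2 - 2 * Real.cos y) (-(2 * -Real.sin x)) x :=
    ((Real.hasDerivAt_cos x).const_mul 2).const_sub 2
  have h3 := (Real.hasDerivAt_cos x).add ((h1.log hne).const_mul (1/2 : ℝ))
  convert h3 using 1
  · rfl
  · rfl
  · rfl
  · ring

lemma cos34 : Real.cos (3 * Real.pi / 4) = -(Real.sqrt 2 / 2) := by
  have : (3 : ℝ) * Real.pi / 4 = Real.pi - Real.pi / 4 := by ring
  rw [this, Real.cos_pi_sub, Real.cos_pi_div_four]

lemma sin34 : Real.sin (3 * Real.pi / 4) = Real.sqrt 2 / 2 := by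
  have : (3 : ℝ) * Real.pi / 4 = Real.pi - Real.pi / 4 := by ring
  rw [this, Real.sin_pi_sub, Real.sin_pi_div_four]

lemma cos32 : Real.cos (3 * Real.pi / 2) = 0 := by
  have : (3 : ℝ) * Real.pi / 2 = Real.pi + Real.pi / 2 := by ring
  rw [this, Real.cos_add]; simp

lemma sin32 : Real.sin (3 * Real.pi / 2) = -1 := by
  have : (3 : ℝ) * Real.pi / 2 = Real.pi + Real.pi / 2 := by ring
  rw [this, Real.sin_add]; simp

lemma hcos34ne : Real.cos (3 * Real.pi / 4) ≠ 1 := by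
  rw [cos34]
  have := Real.sqrt_nonneg 2
  intro h; nlinarith

lemma hcos32ne : Real.cos (3 * Real.pi / 2) ≠ 1 := by rw [cos32]; norm_num

/-- The function `V` for the (1+3)-vortex problem with equal weights `μ₁ = μ₂ = μ₃ = 1`
and `θ₁ = 0` fixed, as a function of `θ₂` and `θ₃`. -/
noncomputable def V3 (a b : ℝ) : ℝ :=
  -((Real.cos a + (1/2) * Real.log (2 - 2 * Real.cos a))
    + (Real.cos b + (1/2) * Real.log (2 - 2 * Real.cos b))
    + (Real.cos (a - b) + (1/2) * Real.log (2 - 2 * Real.cos (a - b))))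

/-- The symmetric configuration `θ₂ = 3π/4`, `θ₃ = -3π/4` is a critical point of `V`. -/
theorem symmetric_three_pi_quarter_critical_point :
    deriv (fun t => V3 t (-(3 * Real.pi / 4))) (3 * Real.pi / 4) = 0 ∧
    deriv (fun t => V3 (3 * Real.pi / 4) t) (-(3 * Real.pi / 4)) = 0 := by
  set f : ℝ → ℝ := fun y => Real.cos y + (1/2) * Real.log (2 - 2 * Real.cos y) with hf
  set f' : ℝ → ℝ := fun x => -Real.sin x + Real.sin x / (2 - 2 * Real.cos x) with hf'
  have key1 : f' (3 * Real.pi / 4) + f' (3 * Real.pi / 2) = 0 := by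
    simp only [hf', cos34, sin34, cos32, sin32]
    have h2 : Real.sqrt 2 ^ 2 = 2 := Real.sq_sqrt (by norm_num)
    have hnn := Real.sqrt_nonneg 2
    have hden : 2 - 2 * -(Real.sqrt 2 / 2) ≠ 0 := by intro h; nlinarith
    have hpos : (0:ℝ) < 2 - 2 * -(Real.sqrt 2 / 2) := by nlinarith
    have e : Real.sqrt 2 / 2 / (2 - 2 * -(Real.sqrt 2 / 2)) = (Real.sqrt 2 - 1) / 2 := by
      rw [div_eq_iff hden]; nlinarith
    rw [e]; norm_num
    ring
  have hodd : f' (-(3 * Real.pi / 4)) = -f' (3 * Real.pi / 4) := by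
    simp only [hf', Real.sin_neg, Real.cos_neg]
    ring
  have key2 : -f' (-(3 * Real.pi / 4)) + f' (3 * Real.pi / 2) = 0 := by
    rw [hodd, neg_neg]; exact key1
  have hsub : (3 * Real.pi / 4) - (-(3 * Real.pi / 4)) = 3 * Real.pi / 2 := by ring
  constructor
  · have d1 := hasDerivAt_f (3 * Real.pi / 4) hcos34ne
    have d3 : HasDerivAt (fun t : ℝ => f (t - (-(3 * Real.pi / 4))))
        (f' (3 * Real.pi / 2)) (3 * Real.pi / 4) :=
      HasDerivAt.comp_sub_const _ _ (by rw [hsub]; exact hasDerivAt_f _ hcos32ne)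
    have D : HasDerivAt (fun t => V3 t (-(3 * Real.pi / 4)))
        (-(f' (3 * Real.pi / 4) + f' (3 * Real.pi / 2))) (3 * Real.pi / 4) := by
      have := ((d1.add_const (f (-(3 * Real.pi / 4)))).add d3).neg
      convert this using 1 <;> rfl
    rw [D.deriv, key1, neg_zero]
  · have hc : Real.cos (-(3 * Real.pi / 4)) ≠ 1 := by
      rw [Real.cos_neg]; exact hcos34ne
    have d2 := hasDerivAt_f (-(3 * Real.pi / 4)) hc
    have d3 : HasDerivAt (fun t : ℝ => f (3 * Real.pi / 4 - t))
        (-f' (3 * Real.pi / 2)) (-(3 * Real.pi / 4)) :=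
      HasDerivAt.comp_const_sub _ _ (by rw [hsub]; exact hasDerivAt_f _ hcos32ne)
    have D : HasDerivAt (fun t => V3 (3 * Real.pi / 4) t)
        (-(f' (-(3 * Real.pi / 4)) + -f' (3 * Real.pi / 2))) (-(3 * Real.pi / 4)) := by
      have := ((d2.const_add (f (3 * Real.pi / 4))).add d3).neg
      convert this using 1 <;> rfl
    rw [D.deriv]
    rw [show -(f' (-(3 * Real.pi / 4)) + -f' (3 * Real.pi / 2))
        = -f' (-(3 * Real.pi / 4)) + f' (3 * Real.pi / 2) by ring, key2]
end

section
/- Suppose (μ₁,μ₂,μ₃) are nonzero reals and r ∈ ℝ, r ∉ {0, ±1}, satisfy both polynomial equations -μ₃ - 6μ₁r² + 15μ₃r² - 4μ₁r⁴ - 15μ₃r⁴ + 2μ₁r⁶ + μ₃r⁶ = 0 and -μ₂ - 6μ₁r² + 15μ₂r² - 4μ₁r⁴ - 15μ₂r⁴ + 2μ₁r⁶ + μ₂r⁶ = 0. Then μ₂ = μ₃. -/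
/-- If nonzero weights `μ₁, μ₂, μ₃` and a non-collision value `r` satisfy both
symmetric-configuration polynomial equations, then `μ₂ = μ₃`. -/
theorem symmetric_config_forces_equal_weights
    (μ₁ μ₂ μ₃ r : ℝ) (hμ₁ : μ₁ ≠ 0) (hμ₂ : μ₂ ≠ 0) (hμ₃ : μ₃ ≠ 0)
    (hr0 : r ≠ 0) (hr1 : r ≠ 1) (hrm1 : r ≠ -1)
    (h3 : -μ₃ - 6*μ₁*r^2 + 15*μ₃*r^2 - 4*μ₁*r^4 - 15*μ₃*r^4 + 2*μ₁*r^6 + μ₃*r^6 = 0)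
    (h2 : -μ₂ - 6*μ₁*r^2 + 15*μ₂*r^2 - 4*μ₁*r^4 - 15*μ₂*r^4 + 2*μ₁*r^6 + μ₂*r^6 = 0) :
    μ₂ = μ₃ := by
  by_cases hQ : r^6 - 15*r^4 + 15*r^2 - 1 = 0
  · -- then from h3, μ₁ * 2r²(r²-3)(r²+1) = 0
    exfalso
    have key : μ₁ * (2*r^2*(r^2-3)*(r^2+1)) = 0 := by
      linear_combination h3 - μ₃ * hQ
    have h1 : r^2 - 3 = 0 := by
      rcases mul_eq_zero.mp key with h | h
      · exact absurd h hμ₁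
      rcases mul_eq_zero.mp h with h | h
      · rcases mul_eq_zero.mp h with h | h
        · nlinarith [sq_nonneg r]
        · linarith
      · nlinarith [sq_nonneg r]
    -- r² = 3 contradicts hQ
    have : r^2 = 3 := by linarith
    rw [show r^6 = (r^2)^3 by ring, show r^4 = (r^2)^2 by ring, this] at hQ
    norm_num at hQ
  · have key : (μ₂ - μ₃) * (r^6 - 15*r^4 + 15*r^2 - 1) = 0 := by
      linear_combination h2 - h3
    rcases mul_eq_zero.mp key with h | h
    · linarith
    · exact absurd h hQ
end

section
/- For N = 2 with nonzero weights μ₁, μ₂, the critical points of V (with θ₁ = 0 fixed) are exactly θ₂ ∈ {π/3, π, 5π/3}; in particular the set of critical configurations is independent of the values of μ₁ and μ₂. -/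
open Real

/-- For `N = 2` with nonzero weights `μ₁, μ₂` and `θ₁ = 0` fixed, the critical points of
`V(0, θ₂) = -μ₁μ₂(cos θ₂ + ½ log(2-2cos θ₂))` on `(0, 2π)` are exactly
`θ₂ ∈ {π/3, π, 5π/3}`; in particular they do not depend on `μ₁, μ₂`. -/
theorem two_vortex_critical_points (μ₁ μ₂ : ℝ) (hμ₁ : μ₁ ≠ 0) (hμ₂ : μ₂ ≠ 0)
    (θ₂ : ℝ) (hθ : θ₂ ∈ Set.Ioo 0 (2 * Real.pi)) :
    deriv (fun t => -(μ₁ * μ₂) * (Real.cos t + (1/2) * Real.log (2 - 2 * Real.cos t))) θ₂ = 0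
      ↔ θ₂ = Real.pi / 3 ∨ θ₂ = Real.pi ∨ θ₂ = 5 * Real.pi / 3 := by
  obtain ⟨h0, h2⟩ := hθ
  have hpi := Real.pi_pos
  have hc1 : Real.cos θ₂ ≠ 1 := by
    intro h
    have := (Real.cos_eq_one_iff_of_lt_of_lt (by linarith) h2).1 h
    exact absurd this (ne_of_gt h0)
  have hclt : Real.cos θ₂ < 1 := lt_of_le_of_ne (Real.cos_le_one θ₂) hc1
  have hdpos : 0 < 2 - 2 * Real.cos θ₂ := by linarith
  have hne : 2 - 2 * Real.cos θ₂ ≠ 0 := ne_of_gt hdpos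
  -- derivative computation
  have hg : HasDerivAt (fun t => 2 - 2 * Real.cos t) (2 * Real.sin θ₂) θ₂ := by
    simpa using ((Real.hasDerivAt_cos θ₂).const_mul (2:ℝ)).const_sub 2
  have hlog : HasDerivAt (fun t => Real.log (2 - 2 * Real.cos t))
      ((2 - 2 * Real.cos θ₂)⁻¹ * (2 * Real.sin θ₂)) θ₂ :=
    by have := (Real.hasDerivAt_log hne).comp θ₂ hg; exact this
  have hd : HasDerivAt (fun t => -(μ₁ * μ₂) * (Real.cos t + (1/2) * Real.log (2 - 2 * Real.cos t)))
      (-(μ₁ * μ₂) * (-Real.sin θ₂ + (1/2) * ((2 - 2 * Real.cos θ₂)⁻¹ * (2 * Real.sin θ₂)))) θ₂ :=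
    ((Real.hasDerivAt_cos θ₂).add (hlog.const_mul (1/2 : ℝ))).const_mul _
  rw [hd.deriv]
  have hμ : μ₁ * μ₂ ≠ 0 := mul_ne_zero hμ₁ hμ₂
  have key : (-(μ₁ * μ₂) * (-Real.sin θ₂ + (1/2) * ((2 - 2 * Real.cos θ₂)⁻¹ * (2 * Real.sin θ₂))) = 0)
      ↔ (Real.sin θ₂ = 0 ∨ Real.cos θ₂ = 1/2) := by
    rw [mul_eq_zero]
    constructor
    · rintro (h | h)
      · exact absurd h (by simpa using hμ)
      · have h' : Real.sin θ₂ * (2 * Real.cos θ₂ - 1) = 0 := by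
          field_simp at h
          nlinarith [h]
        rcases mul_eq_zero.1 h' with h | h
        · exact Or.inl h
        · exact Or.inr (by linarith)
    · rintro (h | h)
      · right; rw [h]; ring
      · right; rw [h]; field_simp; ring
  rw [key]
  constructor
  · rintro (h | h)
    · -- sin θ₂ = 0 on (0, 2π) → θ₂ = π
      obtain ⟨n, hn⟩ := Real.sin_eq_zero_iff.1 h
      have hn1 : n = 1 := by
        have h1 : (0:ℝ) < n * Real.pi := hn ▸ h0
        have h2' : (n:ℝ) * Real.pi < 2 * Real.pi := hn ▸ h2
        have hl : (0:ℤ) < n := by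
          by_contra hl
          push_neg at hl
          have : (n:ℝ) ≤ 0 := by exact_mod_cast hl
          nlinarith
        have hu : n < 2 := by
          by_contra hu
          push_neg at hu
          have : (2:ℝ) ≤ (n:ℝ) := by exact_mod_cast hu
          nlinarith
        omega
      right; left; rw [← hn, hn1]; simp
    · -- cos θ₂ = 1/2
      have hcc : Real.cos (Real.pi / 3) = Real.cos θ₂ := by
        rw [Real.cos_pi_div_three, h]
      obtain ⟨k, hk | hk⟩ := Real.cos_eq_cos_iff.1 hcc
      · left
        have hk0 : k = 0 := by
          have h1 : (0:ℝ) < 2 * k * Real.pi + Real.pi / 3 := hk ▸ h0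
          have h2' : 2 * (k:ℝ) * Real.pi + Real.pi / 3 < 2 * Real.pi := hk ▸ h2
          have hl : (-1:ℤ) < k := by
            by_contra hl
            push_neg at hl
            have : (k:ℝ) ≤ -1 := by exact_mod_cast hl
            nlinarith
          have hu : k < 1 := by
            by_contra hu
            push_neg at hu
            have : (1:ℝ) ≤ (k:ℝ) := by exact_mod_cast hu
            nlinarith
          omega
        rw [hk, hk0]; push_cast; ring
      · right; right
        have hk1 : k = 1 := by
          have h1 : (0:ℝ) < 2 * k * Real.pi - Real.pi / 3 := hk ▸ h0
          have h2' : 2 * (k:ℝ) * Real.pi - Real.pi / 3 < 2 * Real.pi := hk ▸ h2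
          have hl : (0:ℤ) < k := by
            by_contra hl
            push_neg at hl
            have : (k:ℝ) ≤ 0 := by exact_mod_cast hl
            nlinarith
          have hu : k < 2 := by
            by_contra hu
            push_neg at hu
            have : (2:ℝ) ≤ (k:ℝ) := by exact_mod_cast hu
            nlinarith
          omega
        rw [hk, hk1]; push_cast; ring
  · rintro (h | h | h)
    · right; rw [h, Real.cos_pi_div_three]
    · left; rw [h, Real.sin_pi]
    · right
      have : (5:ℝ) * Real.pi / 3 = 2 * Real.pi - Real.pi / 3 := by ring
      rw [h, this, Real.cos_sub, Real.cos_two_pi, Real.sin_two_pi, Real.cos_pi_div_three]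
      ring
end
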